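/- Let a > 1, b > 1 and β = (log a)/(log b). Then ∑_{i=-∞}^{∞} a^{-i} exp(-b^{-i} t) = (1/log b) · t^{-β} · ∑_{m=-∞}^{∞} t^{2πi m/log b} · Γ(β - 2πi m/(log b)) for all t > 0, where Γ is the complex Gamma function and the right-hand series converges absolutely. -/

import Mathlib

open MeasureTheory Set Complex Filter Asymptotics

-- L1: |Γ(z)| ≤ Γ(Re z)
lemma my_norm_Gamma_le {z : ℂ} (hz : 0 < z.re) : ‖Complex.Gamma z‖ ≤ Real.Gamma z.re := by
  rw [Complex.Gamma_eq_integral hz, Real.Gamma_eq_integral hz]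
  refine (norm_integral_le_integral_norm _).trans_eq ?_
  refine setIntegral_congr_fun measurableSet_Ioi (fun x hx => ?_)
  rw [mem_Ioi] at hx
  rw [norm_mul, Complex.norm_real, Real.norm_eq_abs,
    abs_of_pos (Real.exp_pos _), Complex.norm_cpow_eq_rpow_re_of_pos hx, Complex.sub_re,
    Complex.one_re]

-- L2: vertical decay of Gamma
lemma my_Gamma_decay {z : ℂ} (hz : 0 < z.re) (him : z.im ≠ 0) :
    ‖Complex.Gamma z‖ ≤ Real.Gamma (z.re + 2) / z.im ^ 2 := by
  have hz0 : z ≠ 0 := fun h => him (by simp [h])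
  have hz1 : z + 1 ≠ 0 := by
    intro h
    apply him
    have := congrArg Complex.im h
    simpa using this
  have h1 : Complex.Gamma (z + 1) = z * Complex.Gamma z := Complex.Gamma_add_one z hz0
  have h2 : Complex.Gamma (z + 1 + 1) = (z + 1) * Complex.Gamma (z + 1) :=
    Complex.Gamma_add_one _ hz1
  have key : Complex.Gamma (z + 2) = z * (z + 1) * Complex.Gamma z := by
    rw [show z + 2 = z + 1 + 1 by ring, h2, h1]; ring
  have hre2 : (z + 2).re = z.re + 2 := by simp
  have hb : ‖Complex.Gamma (z + 2)‖ ≤ Real.Gamma (z.re + 2) := by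
    have := my_norm_Gamma_le (z := z + 2) (by rw [hre2]; linarith)
    rwa [hre2] at this
  have him1 : |z.im| * |z.im| ≤ ‖z‖ * ‖z + 1‖ := by
    have a1 : |z.im| ≤ ‖z‖ := Complex.abs_im_le_norm z
    have a2 : |z.im| ≤ ‖z + 1‖ := by
      have : (z + 1).im = z.im := by simp
      calc |z.im| = |(z + 1).im| := by rw [this]
        _ ≤ ‖z + 1‖ := Complex.abs_im_le_norm _
    exact mul_le_mul a1 a2 (abs_nonneg _) (norm_nonneg _)
  have hpos : (0:ℝ) < |z.im| * |z.im| := by positivity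
  have : ‖Complex.Gamma z‖ * (|z.im| * |z.im|) ≤ Real.Gamma (z.re + 2) := by
    calc ‖Complex.Gamma z‖ * (|z.im| * |z.im|) ≤ ‖Complex.Gamma z‖ * (‖z‖ * ‖z + 1‖) := by
          exact mul_le_mul_of_nonneg_left him1 (norm_nonneg _)
      _ = ‖z * (z + 1) * Complex.Gamma z‖ := by rw [norm_mul, norm_mul]; ring
      _ = ‖Complex.Gamma (z + 2)‖ := by rw [key]
      _ ≤ _ := hb
  have h2' : z.im ^ 2 = |z.im| * |z.im| := by
    rw [← _root_.sq_abs]; ring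
  rw [h2', le_div_iff₀ hpos]
  exact this

-- L3: summability of Gamma norms along a vertical lattice
lemma my_summable_Gamma {β k : ℝ} (hβ : 0 < β) (hk : 0 < k) (g : ℤ → ℂ)
    (hre : ∀ m, (g m).re = β) (him : ∀ m, |(g m).im| = k * |(m : ℝ)|) :
    Summable fun m : ℤ => ‖Complex.Gamma (g m)‖ := by
  have hsum : Summable fun m : ℤ => (Real.Gamma (β + 2) / k ^ 2) * |(m : ℝ)| ^ (-2 : ℝ) :=
    (Real.summable_abs_int_rpow one_lt_two).mul_left _
  refine hsum.of_norm_bounded_eventually ?_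
  have hne : ∀ᶠ m : ℤ in cofinite, m ≠ 0 := Set.Finite.eventually_cofinite_notMem (Set.finite_singleton 0)
  filter_upwards [hne] with m hm
  have hm' : (m : ℝ) ≠ 0 := Int.cast_ne_zero.mpr hm
  have himne : (g m).im ≠ 0 := by
    intro h
    have := him m
    rw [h, abs_zero] at this
    exact hm' (abs_eq_zero.mp (by nlinarith [abs_nonneg (m:ℝ)] : |(m:ℝ)| = 0))
  have hb := my_Gamma_decay (z := g m) (by rw [hre m]; exact hβ) himne
  rw [hre m] at hb
  rw [norm_norm]
  refine hb.trans (le_of_eq ?_)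
  have h1 : (g m).im ^ 2 = k ^ 2 * (m : ℝ) ^ 2 := by
    rw [← _root_.sq_abs (g m).im, him m, mul_pow, _root_.sq_abs]
  have h2 : |(m : ℝ)| ^ (-2 : ℝ) = ((m : ℝ) ^ 2)⁻¹ := by
    rw [Real.rpow_neg (abs_nonneg _), show (2:ℝ) = ((2:ℕ):ℝ) by norm_num,
      Real.rpow_natCast, _root_.sq_abs]
  rw [h1, h2]
  have : ((m:ℝ))^2 ≠ 0 := pow_ne_zero _ hm'
  field_simp

-- L4: IsBigO from a squeeze
lemma my_isBigO_of_sq {l : Filter ℝ} {g : ℝ → ℝ}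
    (h : Filter.Tendsto (fun x => x ^ 2 * g x) l (nhds 0)) (hl : ∀ᶠ x in l, 1 ≤ |x|) :
    (fun x => (g x : ℂ)) =O[l] (fun x => |x| ^ (-2 : ℝ)) := by
  rw [isBigO_iff]
  refine ⟨1, ?_⟩
  have hev : ∀ᶠ x in l, |x ^ 2 * g x| ≤ 1 := by
    have := Metric.tendsto_nhds.mp h 1 one_pos
    filter_upwards [this] with x hx
    rw [Real.dist_eq, sub_zero] at hx
    exact hx.le
  filter_upwards [hev, hl] with x hx h1x
  have hx2 : (1:ℝ) ≤ x ^ 2 := by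
    rw [← _root_.sq_abs]; nlinarith
  have hx2pos : (0:ℝ) < x ^ 2 := by linarith
  have hgle : |g x| ≤ (x ^ 2)⁻¹ := by
    rw [abs_mul, _root_.abs_of_pos hx2pos] at hx
    nlinarith [abs_nonneg (g x), inv_pos.mpr hx2pos, mul_inv_cancel₀ hx2pos.ne']
  have hnorm : ‖(g x : ℂ)‖ = |g x| := by
    rw [Complex.norm_real, Real.norm_eq_abs]
  have habs : ‖|x| ^ (-2:ℝ)‖ = (x ^ 2)⁻¹ := by
    rw [Real.norm_eq_abs, _root_.abs_of_nonneg (Real.rpow_nonneg (abs_nonneg _) _),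
      Real.rpow_neg (abs_nonneg _), show (2:ℝ) = ((2:ℕ):ℝ) by norm_num,
      Real.rpow_natCast, _root_.sq_abs]
  rw [hnorm, habs, one_mul]
  exact hgle

-- L5: x^2 exp(-kx) → 0 at atTop
lemma my_sq_exp_tendsto {k : ℝ} (hk : 0 < k) :
    Filter.Tendsto (fun x : ℝ => x ^ 2 * Real.exp (-(k * x))) atTop (nhds 0) := by
  have h1 : Filter.Tendsto (fun x : ℝ => k * x) atTop atTop :=
    Filter.Tendsto.const_mul_atTop hk Filter.tendsto_id
  have h2 := (Real.tendsto_pow_mul_exp_neg_atTop_nhds_zero 2).comp h1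
  have h3 := h2.const_mul (k ^ 2)⁻¹
  rw [mul_zero] at h3
  refine h3.congr (fun x => ?_)
  simp only [Function.comp]
  field_simp

-- L6: the atBot side after reflection
lemma my_atbot_aux {la c t : ℝ} (hla : 0 < la) (hc : 0 < c) (ht : 0 < t) :
    Filter.Tendsto (fun y : ℝ => y ^ 2 * Real.exp (la * y - Real.exp (c * y) * t)) atTop
      (nhds 0) := by
  have hdiv : Filter.Tendsto (fun y : ℝ => Real.exp (c * y) / y) atTop atTop := by
    have h1 : Filter.Tendsto (fun y : ℝ => c * y) atTop atTop :=
      Filter.Tendsto.const_mul_atTop hc Filter.tendsto_id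
    have h2 := (Real.tendsto_exp_div_pow_atTop 1).comp h1
    have h3 := Filter.Tendsto.const_mul_atTop hc h2
    refine h3.congr' ?_
    filter_upwards [eventually_gt_atTop (0:ℝ)] with y hy
    simp only [Function.comp, pow_one]
    field_simp
  have hev : ∀ᶠ y : ℝ in atTop, Real.exp (c * y) * t ≥ (la + 1) * y := by
    filter_upwards [hdiv.eventually_ge_atTop ((la + 1) / t), eventually_gt_atTop (0:ℝ)]
      with y h1 h2
    rw [div_le_div_iff₀ ht h2] at h1
    exact h1
  have hsq := my_sq_exp_tendsto (k := 1) one_pos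
  simp only [one_mul] at hsq
  refine tendsto_of_tendsto_of_tendsto_of_le_of_le' (f := fun y : ℝ => y ^ 2 * Real.exp (la * y - Real.exp (c * y) * t)) (g := fun _ => (0:ℝ))
    (h := fun y : ℝ => y ^ 2 * Real.exp (-y)) tendsto_const_nhds ?_ ?_ ?_
  · refine hsq.congr (fun y => by ring_nf)
  · filter_upwards with y
    positivity
  · filter_upwards [hev] with y hy
    have : la * y - Real.exp (c * y) * t ≤ -y := by
      have := hy
      nlinarith [this]
    have hle := Real.exp_le_exp.mpr this
    nlinarith [sq_nonneg y, Real.exp_pos (la * y - Real.exp (c * y) * t)]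

open scoped FourierTransform in
lemma my_fourier {la c t : ℝ} (hla : 0 < la) (hc : 0 < c) (ht : 0 < t) (ξ : ℝ) :
    𝓕 (fun x : ℝ => ((Real.exp (-(la * x)) * Real.exp (-(Real.exp (-(c * x))) * t) : ℝ) : ℂ)) ξ
      = (c : ℂ)⁻¹ * ((1 / (t : ℂ)) ^ (((la / c : ℝ) : ℂ) + ((2 * Real.pi * (ξ / c) : ℝ) : ℂ) * I) *
          Complex.Gamma (((la / c : ℝ) : ℂ) + ((2 * Real.pi * (ξ / c) : ℝ) : ℂ) * I)) := by
  set β : ℝ := la / c with hβ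
  have hβpos : 0 < β := div_pos hla hc
  set s : ℂ := ((β : ℝ) : ℂ) + ((2 * Real.pi * (ξ / c) : ℝ) : ℂ) * I with hs
  have hsre : s.re = β := by simp [hs]
  have hsim : s.im = 2 * Real.pi * (ξ / c) := by simp [hs]
  set F : ℝ → ℂ := fun v => Complex.exp (-((t : ℂ) * (v : ℂ))) with hF
  set G : ℝ → ℂ := fun u => Real.exp (-β * u) • F (Real.exp (-u)) with hG
  have hmellin : mellin F s = (1 / (t : ℂ)) ^ s * Complex.Gamma s := by
    rw [mellin]
    simp only [smul_eq_mul, hF]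
    exact Complex.integral_cpow_mul_exp_neg_mul_Ioi (by rw [hsre]; exact hβpos) ht
  have h2 : mellin F s = 𝓕 G (ξ / c) := by
    rw [mellin_eq_fourier, hG]
    rw [hsre, hsim]
    congr 1
    field_simp
  set H : ℝ → ℂ := fun u => Complex.exp ((↑(-2 * Real.pi * (u * (ξ / c))) : ℂ) * I) • G u
    with hH
  have h4 : 𝓕 G (ξ / c) = ∫ u : ℝ, H u := by
    rw [Real.fourier_eq']
    congr 1
    funext u
    simp only [hH, RCLike.inner_apply, starRingEnd_apply, star_trivial]
    ring_nf
  have h5 : (∫ x : ℝ, H (c * x)) = |c⁻¹| • ∫ u : ℝ, H u :=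
    MeasureTheory.Measure.integral_comp_mul_left H c
  have h6 : 𝓕 (fun x : ℝ =>
      ((Real.exp (-(la * x)) * Real.exp (-(Real.exp (-(c * x))) * t) : ℝ) : ℂ)) ξ
      = ∫ x : ℝ, H (c * x) := by
    rw [Real.fourier_eq']
    congr 1
    funext x
    simp only [hH, hG, hF, RCLike.inner_apply, starRingEnd_apply, star_trivial]
    have harg : -2 * Real.pi * (c * x * (ξ / c)) = -2 * Real.pi * (x * ξ) := by
      field_simp
    rw [harg]
    rw [mul_comm x ξ]
    congr 1
    have h7 : -β * (c * x) = -(la * x) := by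
      rw [hβ]; field_simp
    rw [h7, Complex.real_smul, ← Complex.ofReal_mul, ← Complex.ofReal_neg,
      ← Complex.ofReal_exp, ← Complex.ofReal_mul]
    norm_cast
    ring_nf
  rw [h6, h5, h4.symm, h2.symm, hmellin, abs_of_pos (inv_pos.mpr hc), Complex.real_smul]
  push_cast
  ring

open scoped FourierTransform in
theorem stmt3 (a b : ℝ) (ha : 1 < a) (hb : 1 < b) (t : ℝ) (ht : 0 < t) :
    Summable (fun m : ℤ => ‖(t : ℂ) ^ ((2 * Real.pi * Complex.I * m) / (Real.log b : ℂ)) *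
        Complex.Gamma (((Real.log a / Real.log b : ℝ) : ℂ) -
          2 * Real.pi * Complex.I * m / (Real.log b : ℂ))‖) ∧
    ((∑' i : ℤ, a ^ (-i) * Real.exp (-(b ^ (-i)) * t) : ℝ) : ℂ) =
      (1 / (Real.log b : ℂ)) * (t : ℂ) ^ (-((Real.log a / Real.log b : ℝ) : ℂ)) *
        ∑' m : ℤ, (t : ℂ) ^ ((2 * Real.pi * Complex.I * m) / (Real.log b : ℂ)) *
          Complex.Gamma (((Real.log a / Real.log b : ℝ) : ℂ) -
            2 * Real.pi * Complex.I * m / (Real.log b : ℂ)) := by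
  set la : ℝ := Real.log a with hla'
  set c : ℝ := Real.log b with hc'
  have hla : 0 < la := Real.log_pos ha
  have hc : 0 < c := Real.log_pos hb
  set β : ℝ := la / c with hβ'
  have hβ : 0 < β := div_pos hla hc
  set fr : ℝ → ℝ := fun x => Real.exp (-(la * x)) * Real.exp (-(Real.exp (-(c * x))) * t)
    with hfr
  set f₀ : ℝ → ℂ := fun x => ((fr x : ℝ) : ℂ) with hf₀
  have hcont : Continuous f₀ := by
    apply Complex.continuous_ofReal.comp
    fun_prop
  -- decay
  have hdecay : f₀ =O[cocompact ℝ] (fun x => |x| ^ (-2 : ℝ)) := by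
    rw [cocompact_eq_atBot_atTop, isBigO_sup]
    constructor
    · apply my_isBigO_of_sq
      · have h := (my_atbot_aux hla hc ht).comp tendsto_neg_atBot_atTop
        refine h.congr (fun x => ?_)
        simp only [Function.comp, hfr]
        rw [← Real.exp_add]
        ring_nf
      · filter_upwards [eventually_le_atBot (-1 : ℝ)] with x hx
        rw [_root_.abs_of_nonpos (by linarith : x ≤ (0:ℝ))]; linarith
    · apply my_isBigO_of_sq
      · refine tendsto_of_tendsto_of_tendsto_of_le_of_le'
          (f := fun x : ℝ => x ^ 2 * fr x) (g := fun _ => (0:ℝ))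
          (h := fun x : ℝ => x ^ 2 * Real.exp (-(la * x)))
          tendsto_const_nhds (my_sq_exp_tendsto hla) ?_ ?_
        · filter_upwards with x
          have : 0 ≤ fr x := by positivity
          positivity
        · filter_upwards with x
          have h1 : Real.exp (-(Real.exp (-(c * x))) * t) ≤ 1 := by
            rw [Real.exp_le_one_iff]
            have := Real.exp_pos (-(c * x))
            nlinarith
          have h2 : fr x ≤ Real.exp (-(la * x)) :=
            mul_le_of_le_one_right (Real.exp_pos _).le h1
          nlinarith [sq_nonneg x]
      · filter_upwards [eventually_ge_atTop (1 : ℝ)] with x hx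
        rw [_root_.abs_of_nonneg (by linarith : (0:ℝ) ≤ x)]; linarith
  -- Fourier values
  have hFval : ∀ ξ : ℝ, 𝓕 f₀ ξ = (c : ℂ)⁻¹ *
      ((1 / (t : ℂ)) ^ (((β : ℝ) : ℂ) + ((2 * Real.pi * (ξ / c) : ℝ) : ℂ) * I) *
        Complex.Gamma (((β : ℝ) : ℂ) + ((2 * Real.pi * (ξ / c) : ℝ) : ℂ) * I)) :=
    fun ξ => my_fourier hla hc ht ξ
  -- summability of Gamma norms along both lattices
  have hk : 0 < 2 * Real.pi / c := by positivity
  have hsumG : ∀ d : ℝ, |d| = 2 * Real.pi / c →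
      Summable (fun m : ℤ => ‖Complex.Gamma (((β : ℝ) : ℂ) + ((d * m : ℝ) : ℂ) * I)‖) := by
    intro d hd
    refine my_summable_Gamma hβ hk _ (fun m => by simp) (fun m => ?_)
    simp only [Complex.add_im, Complex.ofReal_im, Complex.mul_im, Complex.ofReal_re,
      Complex.I_im, Complex.I_re, mul_zero, mul_one, zero_add, add_zero, zero_mul]
    rw [abs_mul, hd]
  -- Summable fourier transform values
  have harg1 : ∀ m : ℤ, ((β : ℝ) : ℂ) + ((2 * Real.pi * ((m : ℝ) / c) : ℝ) : ℂ) * I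
      = ((β : ℝ) : ℂ) + ((2 * Real.pi / c * m : ℝ) : ℂ) * I := by
    intro m
    congr 2
    push_cast
    ring
  have hFsum : Summable (fun m : ℤ => 𝓕 f₀ (m : ℝ)) := by
    apply Summable.of_norm
    have hS := (hsumG (2 * Real.pi / c) (abs_of_pos hk)).mul_left
      ((1 / t) ^ β / c)
    refine hS.congr (fun m => ?_)
    rw [hFval (m : ℝ), harg1 m]
    rw [norm_mul, norm_mul]
    have h1 : ‖(c : ℂ)⁻¹‖ = c⁻¹ := by
      rw [← Complex.ofReal_inv, Complex.norm_real, Real.norm_eq_abs,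
        abs_of_pos (inv_pos.mpr hc)]
    have h2 : ‖(1 / (t : ℂ)) ^ (((β : ℝ) : ℂ) + ((2 * Real.pi / c * m : ℝ) : ℂ) * I)‖
        = (1 / t) ^ β := by
      rw [show (1 / (t : ℂ)) = ((1 / t : ℝ) : ℂ) by push_cast; ring,
        Complex.norm_cpow_eq_rpow_re_of_pos (by positivity)]
      norm_num
    rw [h1, h2]
    ring
  -- Poisson
  have hP := Real.tsum_eq_tsum_fourier_of_rpow_decay_of_summable hcont
    one_lt_two hdecay hFsum 0
  simp only [zero_add] at hP
  constructor
  · -- summability conjunct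
    have hS := hsumG (-(2 * Real.pi / c)) (by rw [abs_neg, abs_of_pos hk])
    refine hS.congr (fun m => ?_)
    have hg : ((β : ℝ) : ℂ) - 2 * (Real.pi : ℂ) * I * (m : ℂ) / (c : ℂ)
        = ((β : ℝ) : ℂ) + ((-(2 * Real.pi / c) * m : ℝ) : ℂ) * I := by
      push_cast
      ring
    have he : (2 * (Real.pi : ℂ) * I * (m : ℂ)) / (c : ℂ)
        = ((2 * Real.pi / c * m : ℝ) : ℂ) * I := by
      push_cast
      ring
    rw [norm_mul, he]
    have hg' : ((β : ℝ) : ℂ) - ((2 * Real.pi / c * m : ℝ) : ℂ) * I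
        = ((β : ℝ) : ℂ) + ((-(2 * Real.pi / c) * m : ℝ) : ℂ) * I := by
      push_cast
      ring
    rw [hg']
    have h2 : ‖(t : ℂ) ^ (((2 * Real.pi / c * m : ℝ) : ℂ) * I)‖ = 1 := by
      rw [Complex.norm_cpow_eq_rpow_re_of_pos ht]
      norm_num
    rw [h2, one_mul]
  · -- main identity
    -- LHS
    have hterm : ∀ i : ℤ, a ^ (-i) * Real.exp (-(b ^ (-i)) * t) = fr (i : ℝ) := by
      intro i
      have h1 : a ^ (-i) = Real.exp (-(la * i)) := by
        rw [← Real.rpow_intCast a (-i), Real.rpow_def_of_pos (by linarith : (0:ℝ) < a)]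
        push_cast
        ring_nf
        rw [← hla']; ring_nf
      have h2 : b ^ (-i) = Real.exp (-(c * i)) := by
        rw [← Real.rpow_intCast b (-i), Real.rpow_def_of_pos (by linarith : (0:ℝ) < b)]
        push_cast
        ring_nf
        rw [← hc']; ring_nf
      rw [h1, h2]
    have hLHS : ((∑' i : ℤ, a ^ (-i) * Real.exp (-(b ^ (-i)) * t) : ℝ) : ℂ)
        = ∑' i : ℤ, f₀ (i : ℝ) := by
      rw [tsum_congr hterm, Complex.ofReal_tsum]
    rw [hLHS, hP]
    -- simplify fourier at 0
    have hfour : ∀ m : ℤ, 𝓕 f₀ (m : ℝ) * (fourier m) ((0 : ℝ) : UnitAddCircle)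
        = 𝓕 f₀ (m : ℝ) := by
      intro m
      rw [show ((0 : ℝ) : UnitAddCircle) = 0 by norm_num, fourier_eval_zero, mul_one]
    rw [tsum_congr hfour]
    -- reindex
    have hneg : ∑' m : ℤ, 𝓕 f₀ (m : ℝ) = ∑' m : ℤ, 𝓕 f₀ ((-m : ℤ) : ℝ) := by
      exact ((Equiv.neg ℤ).tsum_eq (fun m : ℤ => 𝓕 f₀ (m : ℝ))).symm
    rw [hneg]
    have hpt : ∀ m : ℤ, 𝓕 f₀ ((-m : ℤ) : ℝ) = ((1 / (c : ℂ)) * (t : ℂ) ^ (-((β : ℝ) : ℂ))) *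
        ((t : ℂ) ^ ((2 * (Real.pi : ℂ) * I * (m : ℂ)) / (c : ℂ)) *
          Complex.Gamma (((β : ℝ) : ℂ) - 2 * (Real.pi : ℂ) * I * (m : ℂ) / (c : ℂ))) := by
      intro m
      rw [hFval ((-m : ℤ) : ℝ)]
      have hargeq : ((β : ℝ) : ℂ) + ((2 * Real.pi * (((-m : ℤ) : ℝ) / c) : ℝ) : ℂ) * I
          = ((β : ℝ) : ℂ) - 2 * (Real.pi : ℂ) * I * (m : ℂ) / (c : ℂ) := by
        push_cast
        ring
      rw [hargeq]
      have harg : (t : ℂ).arg ≠ Real.pi := by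
        rw [Complex.arg_ofReal_of_nonneg ht.le]
        exact Ne.symm Real.pi_ne_zero
      have hcpow : (1 / (t : ℂ)) ^ (((β : ℝ) : ℂ) - 2 * (Real.pi : ℂ) * I * (m : ℂ) / (c : ℂ))
          = (t : ℂ) ^ (-((β : ℝ) : ℂ)) *
            (t : ℂ) ^ ((2 * (Real.pi : ℂ) * I * (m : ℂ)) / (c : ℂ)) := by
        rw [one_div, Complex.inv_cpow _ _ harg, ← Complex.cpow_neg,
          show -(((β : ℝ) : ℂ) - 2 * (Real.pi : ℂ) * I * (m : ℂ) / (c : ℂ))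
            = -((β : ℝ) : ℂ) + (2 * (Real.pi : ℂ) * I * (m : ℂ)) / (c : ℂ) by ring,
          Complex.cpow_add _ _ (Complex.ofReal_ne_zero.mpr ht.ne')]
      rw [hcpow]
      ring
    rw [tsum_congr hpt, tsum_mul_left]
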